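/- Let μ be a Borel probability measure on ℝ whose support is contained in (a,∞) for some real a, let φ : ℝ → ℝ be a bounded, nondecreasing, continuously differentiable function, and let ε > 0. Then ∫_ℝ [φ(λ+ε) − φ(λ)] dμ(λ) ≤ s(μ,ε) · [L − φ(a)], where L = lim_{x→∞} φ(x) (which exists since φ is bounded and nondecreasing). -/

import Mathlib

open MeasureTheory Filter

set_option maxHeartbeats 1000000 in
/-- Let `μ` be a Borel probability measure on `ℝ` whose support is contained
in `(a,∞)`, let `φ : ℝ → ℝ` be a bounded, nondecreasing, continuously differentiable function,
and let `ε > 0`. Then `∫ (φ(λ+ε) − φ(λ)) dμ(λ) ≤ s(μ,ε) · (L − φ(a))`, where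
`L = lim_{x→∞} φ(x)` and `s(μ,ε) = sup_E μ([E−ε,E+ε])`. -/
theorem ssf_partial_integration_halfline
    (μ : Measure ℝ) [IsProbabilityMeasure μ] (a : ℝ)
    (hsupp : μ (Set.Ioi a)ᶜ = 0)
    (φ : ℝ → ℝ) (hmono : Monotone φ) (hbdd : ∃ M, ∀ x, |φ x| ≤ M)
    (hC1 : ContDiff ℝ 1 φ) (L : ℝ) (hL : Tendsto φ atTop (nhds L))
    (ε : ℝ) (hε : 0 < ε) :
    ∫ lam, (φ (lam + ε) - φ lam) ∂μ
      ≤ (⨆ E : ℝ, (μ (Set.Icc (E - ε) (E + ε))).toReal) * (L - φ a) := by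
  obtain ⟨M, hM⟩ := hbdd
  set s : ℝ := ⨆ E : ℝ, (μ (Set.Icc (E - ε) (E + ε))).toReal with hs_def
  set f : ℝ → ℝ := fun lam => φ (lam + ε) - φ lam with hf_def
  have hcont : Continuous φ := hC1.continuous
  have hfc : Continuous f := (hcont.comp (continuous_id.add continuous_const)).sub hcont
  have hfint : Integrable f μ := by
    refine ⟨hfc.aestronglyMeasurable, HasFiniteIntegral.of_bounded (C := 2 * M) ?_⟩
    filter_upwards with x
    have h1 := hM (x + ε); have h2 := hM x
    have : |φ (x + ε) - φ x| ≤ |φ (x + ε)| + |φ x| := abs_sub _ _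
    simp only [hf_def, Real.norm_eq_abs]
    linarith
  -- the partition
  set I : ℕ → Set ℝ := fun k => Set.Ioc (a + k * ε) (a + (k + 1) * ε) with hI_def
  have hmeas : ∀ k, MeasurableSet (I k) := fun k => measurableSet_Ioc
  have hdisj : Pairwise (Function.onFun Disjoint I) := by
    intro i j hij
    rcases hij.lt_or_gt with h | h
    · refine Set.Ioc_disjoint_Ioc.2 ?_
      have : (i : ℝ) + 1 ≤ j := by exact_mod_cast h
      simp only [min_le_iff, le_max_iff]
      right; left; nlinarith
    · refine Set.Ioc_disjoint_Ioc.2 ?_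
      have : (j : ℝ) + 1 ≤ i := by exact_mod_cast h
      simp only [min_le_iff, le_max_iff]
      left; right; nlinarith
  have hIU : (⋃ k, I k) = Set.Ioi a := by
    ext x
    simp only [Set.mem_iUnion, hI_def, Set.mem_Ioc, Set.mem_Ioi]
    constructor
    · rintro ⟨k, h1, h2⟩
      have : (0 : ℝ) ≤ k * ε := mul_nonneg (Nat.cast_nonneg k) hε.le
      linarith
    · intro hx
      have hr : 0 < (x - a) / ε := div_pos (by linarith) hε
      have h1 : 1 ≤ ⌈(x - a) / ε⌉₊ := Nat.ceil_pos.2 hr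
      refine ⟨⌈(x - a) / ε⌉₊ - 1, ?_, ?_⟩
      · have hlt : ((⌈(x - a) / ε⌉₊ - 1 : ℕ) : ℝ) < (x - a) / ε :=
          Nat.lt_ceil.1 (by omega)
        have := (lt_div_iff₀ hε).1 hlt
        linarith
      · have h2 := Nat.le_ceil ((x - a) / ε)
        have h3 : ((⌈(x - a) / ε⌉₊ - 1 : ℕ) : ℝ) + 1 = (⌈(x - a) / ε⌉₊ : ℝ) := by
          rw [Nat.cast_sub h1]; push_cast; ring
        rw [h3]
        have := (div_le_iff₀ hε).1 h2
        linarith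
  -- notation for pieces
  set m : ℕ → ℝ := fun k => (μ (I k)).toReal with hm_def
  set d : ℕ → ℝ := fun k => φ (a + (k + 1) * ε) - φ (a + k * ε) with hd_def
  have hd_nonneg : ∀ k, 0 ≤ d k := by
    intro k
    have : a + (k : ℝ) * ε ≤ a + ((k : ℝ) + 1) * ε := by nlinarith
    simpa [hd_def] using sub_nonneg.2 (hmono this)
  have hm_nonneg : ∀ k, 0 ≤ m k := fun k => ENNReal.toReal_nonneg
  have hm_le_one : ∀ k, m k ≤ 1 := by
    intro k
    rw [hm_def]
    have : μ (I k) ≤ 1 := prob_le_one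
    exact ENNReal.toReal_le_of_le_ofReal one_pos.le (by simpa using this)
  -- the sup is an upper bound
  have hbddS : BddAbove (Set.range fun E : ℝ => (μ (Set.Icc (E - ε) (E + ε))).toReal) := by
    refine ⟨1, ?_⟩
    rintro _ ⟨E, rfl⟩
    exact ENNReal.toReal_le_of_le_ofReal one_pos.le (by simpa using prob_le_one (μ := μ))
  have hle_s : ∀ E : ℝ, (μ (Set.Icc (E - ε) (E + ε))).toReal ≤ s :=
    fun E => le_ciSup hbddS E
  -- adjacent pieces bounded by s
  have hpair : ∀ k, m k + m (k + 1) ≤ s := by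
    intro k
    have hdd : Disjoint (I k) (I (k + 1)) := hdisj (Nat.succ_ne_self k).symm
    have hunion : I k ∪ I (k + 1) = Set.Ioc (a + k * ε) (a + (k + 2) * ε) := by
      rw [hI_def]
      push_cast
      rw [Set.Ioc_union_Ioc_eq_Ioc (by nlinarith) (by nlinarith)]
      ring_nf
    have hadd : m k + m (k + 1) = (μ (I k ∪ I (k + 1))).toReal := by
      rw [measure_union hdd (hmeas (k + 1)), ENNReal.toReal_add (measure_ne_top μ _) (measure_ne_top μ _)]
    rw [hadd, hunion]
    refine le_trans ?_ (hle_s (a + (k + 1) * ε))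
    refine ENNReal.toReal_mono (measure_ne_top μ _) (measure_mono ?_)
    intro x hx
    simp only [Set.mem_Ioc] at hx
    constructor <;> nlinarith [hx.1, hx.2]
  have hm0 : m 0 ≤ s := le_trans (le_add_of_nonneg_right (hm_nonneg 1)) (hpair 0)
  -- sum of d
  have hsum_d : HasSum d (L - φ a) := by
    rw [hasSum_iff_tendsto_nat_of_nonneg hd_nonneg]
    have heq : ∀ n : ℕ, ∑ i ∈ Finset.range n, d i = φ (a + n * ε) - φ a := by
      intro n
      have h := Finset.sum_range_sub (f := fun i : ℕ => φ (a + i * ε)) n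
      calc ∑ i ∈ Finset.range n, d i
          = ∑ i ∈ Finset.range n, (φ (a + ((i + 1 : ℕ) : ℝ) * ε) - φ (a + i * ε)) := by
            refine Finset.sum_congr rfl fun i _ => ?_
            simp only [hd_def]
            push_cast
            ring_nf
        _ = φ (a + n * ε) - φ (a + ((0 : ℕ) : ℝ) * ε) := h
        _ = φ (a + n * ε) - φ a := by norm_num
    simp only [heq]
    have htend : Tendsto (fun n : ℕ => a + n * ε) atTop atTop := by
      apply tendsto_atTop_add_const_left
      exact Tendsto.atTop_mul_const hε tendsto_natCast_atTop_atTop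
    exact (hL.comp htend).sub_const (φ a)
  have hSd : Summable d := hsum_d.summable
  have htsum_d : ∑' k, d k = L - φ a := hsum_d.tsum_eq
  -- integral decomposition
  have hgsum : HasSum (fun k => ∫ x in I k, f x ∂μ) (∫ x, f x ∂μ) := by
    have h1 := hasSum_integral_iUnion hmeas hdisj (hfint.integrableOn (s := ⋃ k, I k))
    have h2 : μ.restrict (⋃ k, I k) = μ := by
      rw [hIU]
      exact Measure.restrict_eq_self_of_ae_mem (by
        rwa [MeasureTheory.ae_iff])
    rwa [h2] at h1
  -- per-piece bound
  have hpiece : ∀ k, ∫ x in I k, f x ∂μ ≤ (d k + d (k + 1)) * m k := by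
    intro k
    have hb : ∀ x ∈ I k, f x ≤ d k + d (k + 1) := by
      intro x hx
      simp only [hI_def, Set.mem_Ioc] at hx
      have h1 : φ (x + ε) ≤ φ (a + ((k : ℝ) + 2) * ε) := hmono (by nlinarith [hx.2])
      have h2 : φ (a + (k : ℝ) * ε) ≤ φ x := hmono (by nlinarith [hx.1])
      have : d k + d (k + 1) = φ (a + ((k : ℝ) + 2) * ε) - φ (a + (k : ℝ) * ε) := by
        simp only [hd_def]; push_cast; ring_nf
      rw [this]
      simp only [hf_def]
      linarith
    calc ∫ x in I k, f x ∂μ ≤ ∫ _x in I k, (d k + d (k + 1)) ∂μ := by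
          refine setIntegral_mono_on hfint.integrableOn (integrableOn_const (LT.lt.ne ?_)) (hmeas k) hb
          exact lt_of_le_of_lt (measure_mono (Set.subset_univ _)) (by simp)
      _ = (d k + d (k + 1)) * m k := by
          rw [setIntegral_const]
          simp only [hm_def, smul_eq_mul, measureReal_def]
          ring
  -- summability of the bounding series
  have hSd1 : Summable (fun k => d (k + 1)) := (summable_nat_add_iff 1).2 hSd
  have hSu : Summable (fun k => d k * m k) := by
    refine Summable.of_nonneg_of_le (fun k => mul_nonneg (hd_nonneg k) (hm_nonneg k)) ?_ hSd
    intro k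
    calc d k * m k ≤ d k * 1 := mul_le_mul_of_nonneg_left (hm_le_one k) (hd_nonneg k)
      _ = d k := mul_one _
  have hSu1 : Summable (fun k => d (k + 1) * m (k + 1)) :=
    (summable_nat_add_iff 1).2 hSu
  have hSv : Summable (fun k => d (k + 1) * m k) := by
    refine Summable.of_nonneg_of_le (fun k => mul_nonneg (hd_nonneg _) (hm_nonneg k)) ?_ hSd1
    intro k
    calc d (k + 1) * m k ≤ d (k + 1) * 1 := mul_le_mul_of_nonneg_left (hm_le_one k) (hd_nonneg _)
      _ = d (k + 1) := mul_one _
  have hSb : Summable (fun k => (d k + d (k + 1)) * m k) := by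
    have : (fun k => (d k + d (k + 1)) * m k) = fun k => d k * m k + d (k + 1) * m k := by
      funext k; ring
    rw [this]; exact hSu.add hSv
  have hSv' : Summable (fun k => d (k + 1) * (s - m (k + 1))) := by
    have : (fun k => d (k + 1) * (s - m (k + 1)))
        = fun k => s * d (k + 1) - d (k + 1) * m (k + 1) := by
      funext k; ring
    rw [this]
    exact (hSd1.mul_left s).sub hSu1
  -- first inequality: integral ≤ ∑ bound
  have step1 : ∫ x, f x ∂μ ≤ ∑' k, (d k + d (k + 1)) * m k := by
    rw [← hgsum.tsum_eq]
    exact Summable.tsum_le_tsum hpiece hgsum.summable hSb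
  -- split the sum
  have split : ∑' k, (d k + d (k + 1)) * m k
      = (∑' k, d k * m k) + ∑' k, d (k + 1) * m k := by
    rw [← Summable.tsum_add hSu hSv]
    congr 1; funext k; ring
  -- bound the shifted part
  have hv_le : ∑' k, d (k + 1) * m k ≤ ∑' k, d (k + 1) * (s - m (k + 1)) := by
    refine Summable.tsum_le_tsum (fun k => ?_) hSv hSv'
    have : m k ≤ s - m (k + 1) := by have := hpair k; linarith
    exact mul_le_mul_of_nonneg_left this (hd_nonneg _)
  -- algebraic combination
  have hv'_eq : ∑' k, d (k + 1) * (s - m (k + 1))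
      = s * (∑' k, d (k + 1)) - ∑' k, d (k + 1) * m (k + 1) := by
    have : (fun k => d (k + 1) * (s - m (k + 1)))
        = fun k => s * d (k + 1) - d (k + 1) * m (k + 1) := by
      funext k; ring
    rw [this, Summable.tsum_sub (hSd1.mul_left s) hSu1, tsum_mul_left]
  have hu_shift : ∑' k, d k * m k = d 0 * m 0 + ∑' k, d (k + 1) * m (k + 1) :=
    Summable.tsum_eq_zero_add hSu
  have hd_shift : ∑' k, d k = d 0 + ∑' k, d (k + 1) := Summable.tsum_eq_zero_add hSd
  have step2 : (∑' k, d k * m k) + ∑' k, d (k + 1) * (s - m (k + 1)) ≤ s * (L - φ a) := by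
    rw [hv'_eq, hu_shift]
    have h1 : ∑' k, d (k + 1) = (L - φ a) - d 0 := by
      rw [← htsum_d, hd_shift]; ring
    rw [h1]
    have h2 : d 0 * m 0 ≤ d 0 * s := mul_le_mul_of_nonneg_left hm0 (hd_nonneg 0)
    nlinarith [hd_nonneg 0]
  calc ∫ lam, (φ (lam + ε) - φ lam) ∂μ = ∫ x, f x ∂μ := rfl
    _ ≤ ∑' k, (d k + d (k + 1)) * m k := step1
    _ = (∑' k, d k * m k) + ∑' k, d (k + 1) * m k := split
    _ ≤ (∑' k, d k * m k) + ∑' k, d (k + 1) * (s - m (k + 1)) := by linarith [hv_le]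
    _ ≤ s * (L - φ a) := step2
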